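/- Let K, K' ⊆ ℝ₊ⁿ be anti-blocking bodies. Then conv(K ∪ (−K')) = ⋃_E conv(P_E K ∪ P_{E⊥}(−K')), the union over all coordinate subspaces E of ℝⁿ. -/

import Mathlib

open Set MeasureTheory Pointwise
open scoped RealInnerProductSpace

def IsAntiBlocking (n : ℕ) (K : Set (EuclideanSpace ℝ (Fin n))) : Prop :=
  IsCompact K ∧ Convex ℝ K ∧ (0 : EuclideanSpace ℝ (Fin n)) ∈ K ∧
    (∀ y ∈ K, ∀ i, (0:ℝ) ≤ y i) ∧
    ∀ y ∈ K, ∀ x : EuclideanSpace ℝ (Fin n),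
      (∀ i, 0 ≤ x i) → (∀ i, x i ≤ y i) → x ∈ K

def coordProj {n : ℕ} (S : Finset (Fin n)) (x : EuclideanSpace ℝ (Fin n)) :
    EuclideanSpace ℝ (Fin n) :=
  WithLp.toLp 2 (fun i => if i ∈ S then x i else 0)

lemma coordProj_mem {n : ℕ} {K : Set (EuclideanSpace ℝ (Fin n))}
    (hK : IsAntiBlocking n K) (S : Finset (Fin n)) {x : EuclideanSpace ℝ (Fin n)}
    (hx : x ∈ K) : coordProj S x ∈ K := by
  obtain ⟨-, -, -, hpos, hdown⟩ := hK
  refine hdown x hx _ (fun i => ?_) (fun i => ?_) <;> simp only [coordProj, WithLp.ofLp_toLp] <;> split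
  · exact hpos x hx i
  · exact le_rfl
  · exact le_rfl
  · exact hpos x hx i

/-- Decomposition of the convex hull of `K ∪ (-K')` for anti-blocking bodies over all
coordinate subspaces. -/
theorem antiBlocking_convexHull_decomposition {n : ℕ}
    {K K' : Set (EuclideanSpace ℝ (Fin n))}
    (hK : IsAntiBlocking n K) (hK' : IsAntiBlocking n K') :
    convexHull ℝ (K ∪ (-K')) = ⋃ S : Finset (Fin n),
      convexHull ℝ (coordProj S '' K ∪ coordProj Sᶜ '' (-K')) := by
  obtain ⟨hKc, hKv, hK0, hKpos, hKdown⟩ := hK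
  obtain ⟨hKc', hKv', hK0', hKpos', hKdown'⟩ := hK'
  apply Set.Subset.antisymm
  · rw [Convex.convexHull_union hKv hKv'.neg ⟨0, hK0⟩ ⟨0, by simpa using hK0'⟩]
    rintro z hz
    rw [mem_convexJoin] at hz
    obtain ⟨x, hx, w, hw, p, t, hp, ht, hpt, hz⟩ := hz
    obtain ⟨y, hy, rfl⟩ : ∃ y ∈ K', w = -y := ⟨-w, by simpa using hw, by simp⟩
    have hp1 : p = 1 - t := by linarith
    subst hp1
    have ht1 : t ≤ 1 := by linarith
    have hzc : ∀ i, z i = (1 - t) * x i - t * y i := by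
      intro i
      rw [← hz]
      simp only [PiLp.add_apply, PiLp.smul_apply, PiLp.neg_apply, smul_eq_mul]
      ring
    set S : Finset (Fin n) := Finset.univ.filter (fun i => 0 ≤ z i) with hS
    set a : EuclideanSpace ℝ (Fin n) := WithLp.toLp 2 (fun i => if 0 ≤ z i then z i / (1 - t) else 0) with ha
    set b : EuclideanSpace ℝ (Fin n) := WithLp.toLp 2 (fun i => if 0 ≤ z i then 0 else -z i / t) with hb
    have hai : ∀ i, a i = if 0 ≤ z i then z i / (1 - t) else 0 := fun i => rfl
    have hbi : ∀ i, b i = if 0 ≤ z i then 0 else -z i / t := fun i => rfl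
    have haK : a ∈ K := by
      refine hKdown x hx a (fun i => ?_) (fun i => ?_) <;> rw [hai i]
      · split
        · exact div_nonneg ‹_› (by linarith)
        · exact le_rfl
      · split
        · rcases lt_or_eq_of_le ht1 with h1 | h1
          · rw [div_le_iff₀ (by linarith)]
            have := hKpos' y hy i
            have := hzc i
            nlinarith
          · rw [← h1]
            simp [hKpos x hx i]
        · exact hKpos x hx i
    have hbK : b ∈ K' := by
      refine hKdown' y hy b (fun i => ?_) (fun i => ?_) <;> rw [hbi i]
      · split
        · exact le_rfl
        · exact div_nonneg (by linarith [not_le.1 ‹¬ 0 ≤ z i›]) ht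
      · split
        · exact hKpos' y hy i
        · rcases lt_or_eq_of_le ht with h1 | h1
          · rw [div_le_iff₀ h1]
            have := hKpos x hx i
            have := hzc i
            nlinarith
          · rw [← h1]
            simp [hKpos' y hy i]
    have haS : coordProj S a = a := by
      ext i
      simp only [coordProj, WithLp.ofLp_toLp, hS, Finset.mem_filter, Finset.mem_univ, true_and]
      split
      · rfl
      · rw [hai i, if_neg ‹_›]
    have hbS : coordProj Sᶜ (-b) = -b := by
      ext i
      simp only [coordProj, WithLp.ofLp_toLp, Finset.mem_compl, hS, Finset.mem_filter, Finset.mem_univ, true_and]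
      split
      · rfl
      · show 0 = -(b i)
        rw [hbi i, if_pos (not_not.1 ‹_›), neg_zero]
    have heq : (1 - t) • a + t • (-b) = z := by
      ext i
      simp only [PiLp.add_apply, PiLp.smul_apply, PiLp.neg_apply, smul_eq_mul, hai i, hbi i]
      split
      · rcases lt_or_eq_of_le ht1 with h1 | h1
        · field_simp
          ring
        · have hz0 : z i = 0 := by
            have h2 := hzc i
            rw [h1] at h2
            have := hKpos' y hy i
            have := ‹0 ≤ z i›
            linarith [h2]
          rw [hz0]; simp
      · rcases lt_or_eq_of_le ht with h1 | h1
        · field_simp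
          ring
        · exfalso
          have h2 := hzc i
          rw [← h1] at h2
          have := hKpos x hx i
          have := not_le.1 ‹¬ 0 ≤ z i›
          linarith [h2]
    have hseg : z ∈ segment ℝ a (-b) := ⟨1 - t, t, by linarith, ht, by ring, heq⟩
    have hamem : a ∈ coordProj S '' K ∪ coordProj Sᶜ '' (-K') := Or.inl ⟨a, haK, haS⟩
    have hbmem : -b ∈ coordProj S '' K ∪ coordProj Sᶜ '' (-K') :=
      Or.inr ⟨-b, Set.neg_mem_neg.2 hbK, hbS⟩
    exact mem_iUnion.2 ⟨S, segment_subset_convexHull hamem hbmem hseg⟩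
  · refine iUnion_subset fun S => convexHull_mono (union_subset_union ?_ ?_)
    · rintro _ ⟨x, hx, rfl⟩
      exact coordProj_mem ⟨hKc, hKv, hK0, hKpos, hKdown⟩ S hx
    · rintro _ ⟨w, hw, rfl⟩
      obtain ⟨y, hy, rfl⟩ : ∃ y ∈ K', w = -y := ⟨-w, by simpa using hw, by simp⟩
      have : coordProj Sᶜ (-y) = -(coordProj Sᶜ y) := by
        ext i
        simp only [coordProj, WithLp.ofLp_toLp, PiLp.neg_apply]
        split <;> simp
      rw [this]
      exact Set.neg_mem_neg.2 (coordProj_mem ⟨hKc', hKv', hK0', hKpos', hKdown'⟩ _ hy)
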